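/- Suppose Assumption 1 holds with p = 1 (so X is real-valued), set U = Y₀ − X₀ β₀, and assume β₀ > 0. If there exists a convex function φ : ℝ → ℝ such that E[φ(λU)] < E[φ(λX)] = ∞ for all λ > 0, then β₀ = max{ b ∈ ℝ : Y₀ ⪰cx X₀ b }; in particular, β₀ is uniquely determined by the marginal distributions of Y and X together with the knowledge that β₀ > 0. -/

import Mathlib

open MeasureTheory ProbabilityTheory Filter Set

noncomputable section

variable {Ω : Type*} [MeasurableSpace Ω]

/-- The centered version `A₀ = A - E[A]` of a real random variable. -/
def cent (μ : Measure Ω) (f : Ω → ℝ) : Ω → ℝ := fun ω => f ω - ∫ ω', f ω' ∂μ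

/-- The centered version `X₀ = X - E[X]` of an `ℝ^p`-valued random vector. -/
def centV {p : ℕ} (μ : Measure Ω) (X : Ω → EuclideanSpace ℝ (Fin p)) :
    Ω → EuclideanSpace ℝ (Fin p) := fun ω => X ω - ∫ ω', X ω' ∂μ

/-- Euclidean inner product `x'y`. -/
def dotp {p : ℕ} (x y : EuclideanSpace ℝ (Fin p)) : ℝ := ∑ i, x i * y i

/-- `A` dominates `B` in the convex order: for every convex `φ : ℝ → ℝ`,
`E[φ(B)] ≤ E[φ(A)]`, where both expectations are well defined in `(-∞, +∞]`
(any convex `φ` is bounded below by an affine function, so for a random variable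
with finite mean the expectation is `+∞` exactly when `φ ∘ ·` is not integrable). -/
def ConvexOrdGE (μ : Measure Ω) (A B : Ω → ℝ) : Prop :=
  ∀ φ : ℝ → ℝ, ConvexOn ℝ Set.univ φ →
    Integrable (fun ω => φ (A ω)) μ →
      Integrable (fun ω => φ (B ω)) μ ∧ ∫ ω, φ (B ω) ∂μ ≤ ∫ ω, φ (A ω) ∂μ



/-- Every convex function on `ℝ` has a supporting line at every point. -/
lemma support_line {ψ : ℝ → ℝ} (hψ : ConvexOn ℝ (Set.univ : Set ℝ) ψ) (x : ℝ) :
    ∃ m : ℝ, ∀ y, ψ x + m * (y - x) ≤ ψ y := by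
  have hmono := hψ.slope_mono (Set.mem_univ x)
  have hne : ((slope ψ x) '' (Set.Iio x)).Nonempty := ⟨_, ⟨x - 1, by simp, rfl⟩⟩
  have hbdd : BddAbove ((slope ψ x) '' (Set.Iio x)) := by
    refine ⟨slope ψ x (x + 1), ?_⟩
    rintro _ ⟨r, hr, rfl⟩
    have hr' : r < x := hr
    exact hmono ⟨Set.mem_univ _, hr'.ne⟩ ⟨Set.mem_univ _, by norm_num⟩ (by linarith)
  refine ⟨sSup ((slope ψ x) '' (Set.Iio x)), fun y => ?_⟩
  rcases lt_trichotomy y x with hy | hy | hy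
  · have hmem : slope ψ x y ∈ (slope ψ x) '' (Set.Iio x) := ⟨y, hy, rfl⟩
    have : slope ψ x y ≤ sSup ((slope ψ x) '' (Set.Iio x)) := le_csSup hbdd hmem
    have hs : slope ψ x y = (ψ y - ψ x) / (y - x) := by
      rw [slope_def_field]
    rw [hs] at this
    have hyx : y - x < 0 := by linarith
    nlinarith [div_mul_cancel₀ (ψ y - ψ x) (ne_of_lt hyx)]
  · simp [hy]
  · have hle : sSup ((slope ψ x) '' (Set.Iio x)) ≤ slope ψ x y := by
      refine csSup_le hne ?_
      rintro _ ⟨r, hr, rfl⟩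
      have hr' : r < x := hr
      exact hmono ⟨Set.mem_univ _, hr'.ne⟩ ⟨Set.mem_univ _, hy.ne'⟩ (by linarith)
    have hs : slope ψ x y = (ψ y - ψ x) / (y - x) := by
      rw [slope_def_field]
    rw [hs] at hle
    have hyx : 0 < y - x := by linarith
    nlinarith [div_mul_cancel₀ (ψ y - ψ x) (ne_of_gt hyx)]

/-- Rational supporting lines approximate a convex function from below at every point. -/
lemma rat_approx {ψ : ℝ → ℝ} (hψ : ConvexOn ℝ (Set.univ : Set ℝ) ψ) (L : ℚ → ℝ)
    (hL : ∀ q : ℚ, ∀ y, ψ q + L q * (y - q) ≤ ψ y) (x : ℝ) {ε : ℝ} (hε : 0 < ε) :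
    ∃ q : ℚ, ψ x - ε ≤ ψ q + L q * (x - q) := by
  obtain ⟨s, hs⟩ := support_line hψ x
  obtain ⟨r, hr⟩ := exists_rat_lt (x - 1)
  obtain ⟨q₀, hq₀r, hq₀x⟩ := exists_rat_btwn (show (r : ℝ) < x by linarith)
  set K : ℝ := (ψ q₀ - ψ r) / ((q₀ : ℝ) - r) with hK
  set M : ℝ := |s| + |K| + 1 with hM
  have hM0 : 0 < M := by positivity
  have hmax : max (q₀ : ℝ) (x - ε / M) < x := by
    rw [max_lt_iff]; exact ⟨by exact_mod_cast hq₀x, by nlinarith [div_pos hε hM0]⟩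
  obtain ⟨q, hq1, hq2⟩ := exists_rat_btwn hmax
  have hq₀q : (q₀ : ℝ) < q := lt_of_le_of_lt (le_max_left _ _) hq1
  have hqx : (q : ℝ) < x := hq2
  have hrq : (r : ℝ) < q := by linarith
  -- L q is at least the slope from r to q
  have hLq : K ≤ L q := by
    have h1 := hL q r
    have h2 : (ψ (q : ℝ) - ψ r) / ((q : ℝ) - r) ≤ L q := by
      rw [div_le_iff₀ (by linarith : (0:ℝ) < (q : ℝ) - r)]
      nlinarith [h1]
    refine le_trans ?_ h2
    have hmono := hψ.slope_mono (Set.mem_univ (r : ℝ))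
    have := hmono (Set.mem_diff_singleton.mpr ⟨Set.mem_univ ((q₀ : ℝ)), hq₀r.ne'⟩)
      (Set.mem_diff_singleton.mpr ⟨Set.mem_univ ((q : ℝ)), hrq.ne'⟩) hq₀q.le
    rwa [slope_def_field, slope_def_field] at this
  have hsq := hs q
  have hxq : 0 < x - q := by linarith
  have hxq' : x - q < ε / M := by linarith [le_max_right (q₀ : ℝ) (x - ε / M)]
  rcases le_or_gt s (L q) with h | h
  · refine ⟨q, ?_⟩
    nlinarith
  · refine ⟨q, ?_⟩
    have h1 : (L q - s) * (x - q) ≥ (K - s) * (x - q) := by nlinarith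
    have h2 : (K - s) * (x - q) ≥ -M * (x - q) := by
      have : -M ≤ K - s := by
        have := abs_le.mp (le_refl |s|); have := neg_abs_le s; have := neg_abs_le K
        have h3 := le_abs_self K
        nlinarith [neg_abs_le K, le_abs_self s]
      nlinarith
    have h3 : -M * (x - q) ≥ -ε := by
      have : M * (x - q) ≤ M * (ε / M) := by nlinarith
      have hMe : M * (ε / M) = ε := by field_simp
      nlinarith
    nlinarith

/-- Conditional Jensen inequality. -/
lemma cond_jensen {Ω : Type*} [mΩ : MeasurableSpace Ω]
    (μ : Measure Ω) [IsProbabilityMeasure μ] {m : MeasurableSpace Ω} (hm : m ≤ mΩ)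
    {f Z : Ω → ℝ} {ψ : ℝ → ℝ}
    (hψ : ConvexOn ℝ Set.univ ψ) (hψc : Continuous ψ)
    (hf : Integrable f μ) (hZm : AEStronglyMeasurable[mΩ] Z μ)
    (hZ : Z =ᵐ[μ] μ[f|m]) (hint : Integrable (fun ω => ψ (f ω)) μ) :
    Integrable (fun ω => ψ (Z ω)) μ ∧ ∫ ω, ψ (Z ω) ∂μ ≤ ∫ ω, ψ (f ω) ∂μ := by
  choose L hL using fun q : ℚ => support_line hψ (q : ℝ)
  set R : Ω → ℝ := μ[fun ω => ψ (f ω)|m] with hR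
  set g : ℚ → Ω → ℝ := fun q ω => L q * f ω + (ψ q - L q * (q : ℝ)) with hg
  have hgint : ∀ q : ℚ, Integrable (g q) μ := fun q =>
    (hf.const_mul (L q)).add (integrable_const _)
  have h1 : ∀ q : ℚ, μ[g q|m] =ᵐ[μ] fun ω => L q * ((μ[f|m]) ω) + (ψ q - L q * (q : ℝ)) := by
    intro q
    have hA : μ[fun ω => L q * f ω|m] =ᵐ[μ] fun ω => L q * ((μ[f|m]) ω) := by
      have := condExp_smul (μ := μ) (m := m) (L q) f
      exact this
    have hB : μ[fun _ : Ω => (ψ q - L q * (q : ℝ))|m] = fun _ => (ψ q - L q * (q : ℝ)) :=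
      condExp_const (μ := μ) hm _
    have := condExp_add (μ := μ) (m := m) (hf.const_mul (L q))
      (integrable_const (ψ q - L q * (q : ℝ)))
    refine this.trans ?_
    filter_upwards [hA] with ω hω
    simp only [Pi.add_apply, hω, hB]
  have h2 : ∀ q : ℚ, μ[g q|m] ≤ᵐ[μ] R := by
    intro q
    refine condExp_mono (hgint q) hint (ae_of_all _ fun ω => ?_)
    have := hL q (f ω)
    simp only [hg]
    nlinarith
  have key : ∀ᵐ ω ∂μ, ∀ q : ℚ, L q * Z ω + (ψ q - L q * (q : ℝ)) ≤ R ω := by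
    rw [ae_all_iff]
    intro q
    filter_upwards [h1 q, h2 q, hZ] with ω hω1 hω2 hω3
    rw [hω3, ← hω1]; exact hω2
  have hZle : ∀ᵐ ω ∂μ, ψ (Z ω) ≤ R ω := by
    filter_upwards [key] with ω hω
    refine le_of_forall_pos_le_add fun ε hε => ?_
    obtain ⟨q, hq⟩ := rat_approx hψ L hL (Z ω) hε
    have := hω q
    nlinarith
  obtain ⟨s0, hs0⟩ := support_line hψ 0
  have hZint : Integrable Z μ := integrable_condExp.congr hZ.symm
  have hlow : ∀ ω, ψ 0 + s0 * Z ω ≤ ψ (Z ω) := fun ω => by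
    have := hs0 (Z ω); nlinarith
  have hRint : Integrable R μ := integrable_condExp
  have haesm : AEStronglyMeasurable[mΩ] (fun ω => ψ (Z ω)) μ :=
    hψc.comp_aestronglyMeasurable hZm
  have hgint2 : Integrable (fun ω => |R ω| + |ψ 0 + s0 * Z ω|) μ :=
    hRint.abs.add ((integrable_const _).add (hZint.const_mul s0)).abs
  have hψZint : Integrable (fun ω => ψ (Z ω)) μ := by
    refine Integrable.mono' hgint2 haesm ?_
    filter_upwards [hZle] with ω hω
    rw [Real.norm_eq_abs, abs_le]
    constructor
    · have := hlow ω
      have h1 : -(|ψ 0 + s0 * Z ω|) ≤ ψ 0 + s0 * Z ω := neg_abs_le _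
      nlinarith [abs_nonneg (R ω)]
    · have h1 : R ω ≤ |R ω| := le_abs_self _
      nlinarith [abs_nonneg (ψ 0 + s0 * Z ω)]
  refine ⟨hψZint, ?_⟩
  have h3 := integral_mono_ae hψZint hRint hZle
  have h4 : ∫ ω, R ω ∂μ = ∫ ω, ψ (f ω) ∂μ := integral_condExp hm
  linarith

lemma pos_part_int {Ω : Type*} [mΩ : MeasurableSpace Ω] {μ : Measure Ω}
    [IsFiniteMeasure μ] {f : Ω → ℝ} (hf : Integrable f μ) (c : ℝ) :
    Integrable (fun ω => max (f ω - c) 0) μ :=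
  (hf.sub (integrable_const c)).pos_part

lemma pos_scale (a c t : ℝ) (ha : 0 < a) : max (a * t - c) 0 = a * max (t - c / a) 0 := by
  have h2 : c / a * a = c := div_mul_cancel₀ c ha.ne'
  rcases le_total t (c / a) with h | h
  · rw [max_eq_right, max_eq_right, mul_zero]
    · nlinarith
    · nlinarith
  · rw [max_eq_left, max_eq_left] <;> nlinarith

lemma pos_int_scale {Ω : Type*} [mΩ : MeasurableSpace Ω] {μ : Measure Ω}
    {f : Ω → ℝ} (a c : ℝ) (ha : 0 < a) :
    ∫ ω, max (a * f ω - c) 0 ∂μ = a * ∫ ω, max (f ω - c / a) 0 ∂μ := by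
  simp_rw [fun ω => pos_scale a c (f ω) ha]
  exact integral_const_mul a _

/-- The key consequence of the convex order between `βA + V` and `bA`. -/
lemma key_tail {Ω : Type*} [mΩ : MeasurableSpace Ω] (μ : Measure Ω) [IsProbabilityMeasure μ]
    {A V : Ω → ℝ} {β b : ℝ} (hβ : 0 < β) (hb : β < b)
    (hA : Integrable A μ) (hV : Integrable V μ)
    (hord : ∀ c : ℝ, ∫ ω, max (b * A ω - c) 0 ∂μ ≤ ∫ ω, max (β * A ω + V ω - c) 0 ∂μ) :
    ∀ s : ℝ, (b - β) * ∫ ω, max (A ω - s) 0 ∂μ ≤ ∫ ω, max (V ω - (b - β) * s) 0 ∂μ := by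
  intro s
  have h1 : ∫ ω, max (b * A ω - b * s) 0 ∂μ = b * ∫ ω, max (A ω - s) 0 ∂μ := by
    have := pos_int_scale (μ := μ) (f := A) b (b * s) (hβ.trans hb)
    rw [this, mul_div_cancel_left₀ s (hβ.trans hb).ne']
  have h2 : ∫ ω, max (β * A ω + V ω - b * s) 0 ∂μ ≤
      β * ∫ ω, max (A ω - s) 0 ∂μ + ∫ ω, max (V ω - (b - β) * s) 0 ∂μ := by
    have hpt : ∀ ω, max (β * A ω + V ω - b * s) 0 ≤
        max (β * A ω - β * s) 0 + max (V ω - (b - β) * s) 0 := by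
      intro ω
      rcases le_total (β * A ω + V ω - b * s) 0 with h | h
      · have := le_max_right (β * A ω - β * s) (0:ℝ)
        have := le_max_right (V ω - (b - β) * s) (0:ℝ)
        rw [max_eq_right h]; positivity
      · rw [max_eq_left h]
        have h3 := le_max_left (β * A ω - β * s) (0:ℝ)
        have h4 := le_max_left (V ω - (b - β) * s) (0:ℝ)
        nlinarith
    have hint1 : Integrable (fun ω => max (β * A ω - β * s) 0 + max (V ω - (b - β) * s) 0) μ :=
      (pos_part_int (hA.const_mul β) (β * s)).add (pos_part_int hV ((b - β) * s))
    have hI : Integrable (fun ω => max (β * A ω + V ω - b * s) 0) μ := by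
      have := pos_part_int ((hA.const_mul β).add hV) (b * s); simpa using this
    have := integral_mono hI hint1 hpt
    rw [integral_add (pos_part_int (hA.const_mul β) (β * s))
      (pos_part_int hV ((b - β) * s))] at this
    have h5 : ∫ ω, max (β * A ω - β * s) 0 ∂μ = β * ∫ ω, max (A ω - s) 0 ∂μ := by
      have := pos_int_scale (μ := μ) (f := A) β (β * s) hβ
      rw [this, mul_div_cancel_left₀ s hβ.ne']
    linarith
  have := hord (b * s)
  rw [h1] at this
  linarith
lemma tail_integrable {Ω : Type*} [mΩ : MeasurableSpace Ω] (μ : Measure Ω) [IsProbabilityMeasure μ]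
    {ψ : ℝ → ℝ} (hψ : ConvexOn ℝ Set.univ ψ) (hmono : Monotone ψ) (hpos : ∀ t, 0 ≤ ψ t)
    {W V : Ω → ℝ} (hWm : Measurable W) (hW : Integrable W μ) (hV : Integrable V μ)
    (hψV : Integrable (fun ω => ψ (V ω)) μ)
    {γ : ℝ} (hγ : 0 < γ)
    (hHG : ∀ s : ℝ, γ * ∫ ω, max (W ω - s) 0 ∂μ ≤ ∫ ω, max (V ω - γ * s) 0 ∂μ) :
    Integrable (fun ω => ψ (γ / 2 * W ω)) μ := by
  set dd : ℕ → ℝ := fun k => ψ ((k : ℝ) + 1) - ψ (k : ℝ) with hdd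
  set e : ℕ → ℝ := fun k => Nat.casesOn k (dd 0) (fun n => dd (n + 1) - dd n) with he
  have he_succ : ∀ n : ℕ, e (n + 1) = dd (n + 1) - dd n := fun n => rfl
  have he_zero : e 0 = dd 0 := rfl
  have hdmono : ∀ k : ℕ, dd k ≤ dd (k + 1) := by
    intro k
    have h := hψ.slope_mono_adjacent (Set.mem_univ ((k : ℝ))) (Set.mem_univ ((k : ℝ) + 2))
      (show (k : ℝ) < (k : ℝ) + 1 by linarith) (show (k : ℝ) + 1 < (k : ℝ) + 2 by linarith)
    have e1 : ((k : ℝ) + 1 - k) = 1 := by ring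
    have e2 : ((k : ℝ) + 2 - ((k : ℝ) + 1)) = 1 := by ring
    rw [e1, e2, div_one, div_one] at h
    have e3 : ((k : ℝ) + 1) + 1 = (k : ℝ) + 2 := by ring
    simp only [hdd]
    push_cast
    rw [e3]
    linarith
  have he0 : ∀ k, 0 ≤ e k := by
    intro k
    cases k with
    | zero => simpa [he_zero, hdd] using hmono (show (0:ℝ) ≤ 1 by norm_num)
    | succ n => rw [he_succ]; linarith [hdmono n]
  have hT1 : ∀ n : ℕ, ∑ k ∈ Finset.range (n + 1), e k = dd n := by
    intro n
    induction n with
    | zero => simp [he_zero]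
    | succ n ih => rw [Finset.sum_range_succ, ih, he_succ]; ring
  have hT2 : ∀ n : ℕ, ∑ k ∈ Finset.range n, e k * ((n : ℝ) - k) = ψ n - ψ 0 := by
    intro n
    induction n with
    | zero => simp
    | succ n ih =>
      have h1 : ∑ k ∈ Finset.range (n + 1), e k * (((n : ℕ) + 1 : ℝ) - k)
          = ∑ k ∈ Finset.range (n + 1), (e k * ((n : ℝ) - k) + e k) :=
        Finset.sum_congr rfl (fun k _ => by push_cast; ring)
      have h2 : ∑ k ∈ Finset.range (n + 1), e k * ((n : ℝ) - k)
          = ∑ k ∈ Finset.range n, e k * ((n : ℝ) - k) := by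
        rw [Finset.sum_range_succ]; simp
      push_cast
      rw [h1, Finset.sum_add_distrib, h2, ih, hT1 n]
      simp only [hdd]
      push_cast
      ring
  -- upper interpolation bound
  have hL1 : ∀ (t : ℝ) (N : ℕ), t + 1 ≤ N → ψ t ≤ ψ 0 + ∑ k ∈ Finset.range N, e k * max (t - k) 0 := by
    intro t N hN
    rcases le_or_gt t 0 with ht | ht
    · have hsum : 0 ≤ ∑ k ∈ Finset.range N, e k * max (t - k) 0 :=
        Finset.sum_nonneg fun k _ => mul_nonneg (he0 k) (le_max_right _ _)
      have := hmono ht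
      linarith
    · set n := ⌊t⌋₊ with hn
      have hn1 : (n : ℝ) ≤ t := Nat.floor_le ht.le
      have hn2 : t < (n : ℝ) + 1 := Nat.lt_floor_add_one t
      have hnN : n + 1 ≤ N := by
        have h1 : ((n : ℕ) : ℝ) + 1 ≤ (N : ℝ) := by linarith
        exact_mod_cast h1
      have hchord : ψ t ≤ ψ n + (t - n) * dd n := by
        have ha : (0:ℝ) ≤ (n : ℝ) + 1 - t := by linarith
        have hb : (0:ℝ) ≤ t - n := by linarith
        have hab : ((n : ℝ) + 1 - t) + (t - n) = 1 := by ring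
        have h := hψ.2 (Set.mem_univ ((n : ℝ))) (Set.mem_univ ((n : ℝ) + 1)) ha hb hab
        have harg : ((n : ℝ) + 1 - t) • (n : ℝ) + (t - n) • ((n : ℝ) + 1) = t := by
          simp only [smul_eq_mul]; ring
        rw [harg] at h
        simp only [smul_eq_mul, hdd] at h ⊢
        nlinarith [h]
      have hsplit : ψ 0 + ∑ k ∈ Finset.range (n + 1), e k * (t - k) = ψ n + (t - n) * dd n := by
        have h1 : ∑ k ∈ Finset.range (n + 1), e k * (t - k)
            = ∑ k ∈ Finset.range (n + 1), (e k * ((n : ℝ) - k) + e k * (t - n)) :=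
          Finset.sum_congr rfl (fun k _ => by ring)
        have h2 : ∑ k ∈ Finset.range (n + 1), e k * ((n : ℝ) - k)
            = ∑ k ∈ Finset.range n, e k * ((n : ℝ) - k) := by
          rw [Finset.sum_range_succ]; simp
        rw [h1, Finset.sum_add_distrib, h2, hT2 n, ← Finset.sum_mul, hT1 n]
        ring
      have hmax : ∑ k ∈ Finset.range (n + 1), e k * (t - k)
          ≤ ∑ k ∈ Finset.range N, e k * max (t - k) 0 := by
        have h1 : ∑ k ∈ Finset.range (n + 1), e k * (t - k)
            = ∑ k ∈ Finset.range (n + 1), e k * max (t - k) 0 := by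
          refine Finset.sum_congr rfl (fun k hk => ?_)
          have hk' : (k : ℝ) ≤ n := by
            exact_mod_cast Nat.le_of_lt_succ (Finset.mem_range.mp hk)
          rw [max_eq_left (by linarith)]
        rw [h1]
        exact Finset.sum_le_sum_of_subset_of_nonneg (Finset.range_subset_range.mpr hnN)
          (fun k _ _ => mul_nonneg (he0 k) (le_max_right _ _))
      linarith
  -- lower interpolation bound
  have hL2 : ∀ (t : ℝ) (N : ℕ), ∑ k ∈ Finset.range N, e k * max (t - ((k : ℝ) + 1)) 0 ≤ ψ t := by
    intro t N
    rcases lt_or_ge t 0 with ht | ht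
    · have h1 : ∑ k ∈ Finset.range N, e k * max (t - ((k : ℝ) + 1)) 0 = 0 := by
        refine Finset.sum_eq_zero (fun k _ => ?_)
        have hk0 : (0:ℝ) ≤ (k : ℝ) := Nat.cast_nonneg k
        rw [max_eq_right (by linarith : t - ((k:ℝ)+1) ≤ 0), mul_zero]
      rw [h1]; exact hpos t
    · set n := ⌊t⌋₊ with hn
      have hn1 : (n : ℝ) ≤ t := Nat.floor_le ht
      have hn2 : t < (n : ℝ) + 1 := Nat.lt_floor_add_one t
      set M := max N n with hM
      have h1 : ∑ k ∈ Finset.range N, e k * max (t - ((k : ℝ) + 1)) 0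
          ≤ ∑ k ∈ Finset.range N, e k * max ((n : ℝ) - k) 0 := by
        refine Finset.sum_le_sum (fun k _ => ?_)
        exact mul_le_mul_of_nonneg_left (max_le_max (by linarith) le_rfl) (he0 k)
      have h2 : ∑ k ∈ Finset.range N, e k * max ((n : ℝ) - k) 0
          ≤ ∑ k ∈ Finset.range M, e k * max ((n : ℝ) - k) 0 :=
        Finset.sum_le_sum_of_subset_of_nonneg (Finset.range_subset_range.mpr (le_max_left _ _))
          (fun k _ _ => mul_nonneg (he0 k) (le_max_right _ _))
      have h3 : ∑ k ∈ Finset.range M, e k * max ((n : ℝ) - k) 0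
          = ∑ k ∈ Finset.range n, e k * ((n : ℝ) - k) := by
        rw [← Finset.sum_subset (Finset.range_subset_range.mpr (le_max_right N n))]
        · refine Finset.sum_congr rfl (fun k hk => ?_)
          have hk' : k < n := Finset.mem_range.mp hk
          have : (k : ℝ) < n := by exact_mod_cast hk'
          rw [max_eq_left (by linarith)]
        · intro k _ hk
          have hk' : n ≤ k := Nat.le_of_not_lt (fun h => hk (Finset.mem_range.mpr h))
          have : (n : ℝ) ≤ k := by exact_mod_cast hk'
          rw [max_eq_right (by linarith), mul_zero]
      have h4 : ψ (n : ℝ) ≤ ψ t := hmono hn1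
      have h5 := hpos (0 : ℝ)
      rw [hT2 n] at h3
      linarith
  -- summability of the `V`-side series
  set C : ℝ := ∫ ω, ψ (V ω) ∂μ with hC
  set c : ℕ → ℝ := fun k => e k * ∫ ω, max (V ω - ((k : ℝ) + 1)) 0 ∂μ with hc
  have hcint : ∀ k : ℕ, Integrable (fun ω => e k * max (V ω - ((k : ℝ) + 1)) 0) μ :=
    fun k => (pos_part_int hV ((k : ℝ) + 1)).const_mul (e k)
  have hc_nonneg : ∀ k, 0 ≤ c k := fun k =>
    mul_nonneg (he0 k) (integral_nonneg (fun ω => le_max_right _ _))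
  have hc_psum : ∀ N : ℕ, ∑ k ∈ Finset.range N, c k ≤ C := by
    intro N
    have h1 : ∑ k ∈ Finset.range N, c k
        = ∫ ω, (∑ k ∈ Finset.range N, e k * max (V ω - ((k : ℝ) + 1)) 0) ∂μ := by
      rw [integral_finset_sum _ (fun k _ => hcint k)]
      refine Finset.sum_congr rfl (fun k _ => ?_)
      rw [hc, integral_const_mul]
    rw [h1, hC]
    refine integral_mono (integrable_finset_sum _ (fun k _ => hcint k)) hψV (fun ω => ?_)
    exact hL2 (V ω) N
  have hcsum : Summable c := summable_of_sum_range_le hc_nonneg hc_psum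
  have hctsum : ∑' k, c k ≤ C := Real.tsum_le_of_sum_range_le hc_nonneg hc_psum
  -- the `W`-side coefficients
  set lam : ℝ := γ / 2 with hlam
  have hlam0 : 0 < lam := by positivity
  set a : ℕ → ℝ := fun k => e k * ∫ ω, max (lam * W ω - k) 0 ∂μ with ha
  have haint : ∀ k : ℕ, Integrable (fun ω => max (lam * W ω - (k:ℝ)) 0) μ :=
    fun k => pos_part_int (hW.const_mul lam) (k : ℝ)
  have ha_nonneg : ∀ k, 0 ≤ a k := fun k =>
    mul_nonneg (he0 k) (integral_nonneg (fun ω => le_max_right _ _))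
  have ha_bound : ∀ k : ℕ, 1 ≤ k → a k ≤ (lam / γ) * c k := by
    intro k hk
    have h1 : ∫ ω, max (lam * W ω - (k:ℝ)) 0 ∂μ = lam * ∫ ω, max (W ω - (k:ℝ) / lam) 0 ∂μ :=
      pos_int_scale lam (k : ℝ) hlam0
    have h2 := hHG ((k : ℝ) / lam)
    have h3 : γ * ((k:ℝ) / lam) = 2 * k := by
      rw [hlam]; field_simp
    rw [h3] at h2
    have h4 : ∫ ω, max (V ω - 2 * (k:ℝ)) 0 ∂μ ≤ ∫ ω, max (V ω - ((k:ℝ) + 1)) 0 ∂μ := by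
      refine integral_mono (pos_part_int hV _) (pos_part_int hV _) (fun ω => ?_)
      have hk1 : (1:ℝ) ≤ (k:ℝ) := by exact_mod_cast hk
      exact max_le_max (by linarith) le_rfl
    have h5 : ∫ ω, max (W ω - (k:ℝ) / lam) 0 ∂μ ≤ (1 / γ) * ∫ ω, max (V ω - ((k:ℝ)+1)) 0 ∂μ := by
      rw [div_mul_eq_mul_div, le_div_iff₀ hγ]
      nlinarith [h2, h4]
    calc a k = e k * ∫ ω, max (lam * W ω - (k:ℝ)) 0 ∂μ := rfl
      _ = e k * (lam * ∫ ω, max (W ω - (k:ℝ) / lam) 0 ∂μ) := by rw [h1]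
      _ ≤ e k * (lam * ((1 / γ) * ∫ ω, max (V ω - ((k:ℝ)+1)) 0 ∂μ)) := by
          refine mul_le_mul_of_nonneg_left (mul_le_mul_of_nonneg_left h5 hlam0.le) (he0 k)
      _ = (lam / γ) * c k := by rw [hc]; ring
  -- uniform bound on partial sums of `a`
  set B : ℝ := a 0 + (lam / γ) * C with hB
  have ha_psum : ∀ N : ℕ, ∑ k ∈ Finset.range N, a k ≤ B := by
    intro N
    cases N with
    | zero =>
      simp only [Finset.range_zero, Finset.sum_empty, hB]
      have h0 : (0:ℝ) ≤ C := le_trans (by simp) (hc_psum 0)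
      have h1 := ha_nonneg 0
      have h2 : (0:ℝ) ≤ lam / γ := by positivity
      nlinarith
    | succ N =>
      rw [Finset.sum_range_succ' a N]
      have h1 : ∑ k ∈ Finset.range N, a (k + 1) ≤ (lam / γ) * ∑ k ∈ Finset.range N, c (k + 1) := by
        rw [Finset.mul_sum]
        exact Finset.sum_le_sum (fun k _ => ha_bound (k + 1) (Nat.le_add_left 1 k))
      have h2 : ∑ k ∈ Finset.range N, c (k + 1) ≤ ∑' k, c k := by
        have h3 : ∑ k ∈ Finset.range N, c (k + 1) ≤ ∑ k ∈ Finset.range (N + 1), c k := by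
          rw [Finset.sum_range_succ' c N]
          have := hc_nonneg 0
          linarith
        exact le_trans h3 (Summable.sum_le_tsum _ (fun k _ => hc_nonneg k) hcsum)
      have h4 : (0:ℝ) ≤ lam / γ := by positivity
      have h5 : (lam / γ) * ∑ k ∈ Finset.range N, c (k + 1) ≤ (lam / γ) * ∑' k, c k :=
        mul_le_mul_of_nonneg_left h2 h4
      have h6 : (lam / γ) * ∑' k, c k ≤ (lam / γ) * C := mul_le_mul_of_nonneg_left hctsum h4
      rw [hB]
      linarith
  -- measurability
  have hmeas : Measurable (fun ω => ψ (lam * W ω)) :=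
    hmono.measurable.comp (hWm.const_mul lam)
  refine ⟨hmeas.aestronglyMeasurable, ?_⟩
  -- finite lintegral via the interpolation majorant
  rw [hasFiniteIntegral_iff_ofReal (ae_of_all _ (fun ω => hpos (lam * W ω)))]
  -- pointwise bound by the series majorant
  have hptw : ∀ ω, ENNReal.ofReal (ψ (lam * W ω)) ≤
      ENNReal.ofReal (ψ 0) + ∑' k, ENNReal.ofReal (e k * max (lam * W ω - (k:ℝ)) 0) := by
    intro ω
    set t := lam * W ω with htdef
    set N : ℕ := ⌊max t 0⌋₊ + 2 with hN
    have hN1 : t + 1 ≤ (N : ℝ) := by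
      have h1 : max t 0 < (⌊max t 0⌋₊ : ℝ) + 1 := Nat.lt_floor_add_one (max t 0)
      have h2 : t ≤ max t 0 := le_max_left t 0
      rw [hN]
      push_cast
      linarith
    have h3 := hL1 t N hN1
    have h4 : ENNReal.ofReal (ψ t) ≤ ENNReal.ofReal (ψ 0)
        + ENNReal.ofReal (∑ k ∈ Finset.range N, e k * max (t - (k:ℝ)) 0) := by
      rw [← ENNReal.ofReal_add (hpos 0) (Finset.sum_nonneg (fun k _ =>
        mul_nonneg (he0 k) (le_max_right _ _)))]
      exact ENNReal.ofReal_le_ofReal h3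
    refine h4.trans (add_le_add_right ?_ _)
    rw [ENNReal.ofReal_sum_of_nonneg (fun k _ => mul_nonneg (he0 k) (le_max_right _ _))]
    exact ENNReal.sum_le_tsum (Finset.range N)
  have hlint := lintegral_mono (μ := μ) hptw
  have hmeask : ∀ k : ℕ, Measurable (fun ω => ENNReal.ofReal (e k * max (lam * W ω - (k:ℝ)) 0)) := by
    intro k
    exact (((hWm.const_mul lam).sub measurable_const).max measurable_const).const_mul
      (e k) |>.ennreal_ofReal
  have hsplit : ∫⁻ ω, (ENNReal.ofReal (ψ 0)
      + ∑' k, ENNReal.ofReal (e k * max (lam * W ω - (k:ℝ)) 0)) ∂μ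
      = ENNReal.ofReal (ψ 0) + ∑' k, ∫⁻ ω, ENNReal.ofReal (e k * max (lam * W ω - (k:ℝ)) 0) ∂μ := by
    rw [lintegral_add_left measurable_const, lintegral_const, measure_univ, mul_one,
      lintegral_tsum (fun k => (hmeask k).aemeasurable)]
  have hval : ∀ k : ℕ, ∫⁻ ω, ENNReal.ofReal (e k * max (lam * W ω - (k:ℝ)) 0) ∂μ
      = ENNReal.ofReal (a k) := by
    intro k
    rw [← ofReal_integral_eq_lintegral_ofReal ((haint k).const_mul (e k))
      (ae_of_all _ (fun ω => mul_nonneg (he0 k) (le_max_right _ _)))]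
    rw [ha, integral_const_mul]
  have htsum_bound : ∑' k, ENNReal.ofReal (a k) ≤ ENNReal.ofReal B := by
    rw [ENNReal.tsum_eq_iSup_sum]
    refine iSup_le (fun s => ?_)
    obtain ⟨N, hsN⟩ := s.exists_nat_subset_range
    calc ∑ k ∈ s, ENNReal.ofReal (a k)
        ≤ ∑ k ∈ Finset.range N, ENNReal.ofReal (a k) :=
          Finset.sum_le_sum_of_subset_of_nonneg hsN (fun _ _ _ => zero_le)
      _ = ENNReal.ofReal (∑ k ∈ Finset.range N, a k) :=
          (ENNReal.ofReal_sum_of_nonneg (fun k _ => ha_nonneg k)).symm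
      _ ≤ ENNReal.ofReal B := ENNReal.ofReal_le_ofReal (ha_psum N)
  calc ∫⁻ ω, ENNReal.ofReal (ψ (lam * W ω)) ∂μ
      ≤ ENNReal.ofReal (ψ 0) + ∑' k, ∫⁻ ω, ENNReal.ofReal (e k * max (lam * W ω - (k:ℝ)) 0) ∂μ := by
        rw [← hsplit]; exact hlint
    _ = ENNReal.ofReal (ψ 0) + ∑' k, ENNReal.ofReal (a k) := by
        congr 1
        exact tsum_congr hval
    _ ≤ ENNReal.ofReal (ψ 0) + ENNReal.ofReal B := add_le_add_right htsum_bound _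
    _ < ⊤ := by
        exact ENNReal.add_lt_top.mpr ⟨ENNReal.ofReal_lt_top, ENNReal.ofReal_lt_top⟩


lemma convexOn_pos_shift (c : ℝ) : ConvexOn ℝ (Set.univ : Set ℝ) (fun t => max (t - c) 0) := by
  refine ⟨convex_univ, fun x _ y _ a b ha hb hab => ?_⟩
  simp only [smul_eq_mul]
  refine max_le ?_ (by positivity)
  have h1 := mul_le_mul_of_nonneg_left (le_max_left (x - c) 0) ha
  have h2 := mul_le_mul_of_nonneg_left (le_max_left (y - c) 0) hb
  have h4 : a * c + b * c = c := by linear_combination c * hab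
  linarith

lemma convexOn_neg_shift (c : ℝ) : ConvexOn ℝ (Set.univ : Set ℝ) (fun t => max (-t - c) 0) := by
  refine ⟨convex_univ, fun x _ y _ a b ha hb hab => ?_⟩
  simp only [smul_eq_mul]
  refine max_le ?_ (by positivity)
  have h1 := mul_le_mul_of_nonneg_left (le_max_left (-x - c) 0) ha
  have h2 := mul_le_mul_of_nonneg_left (le_max_left (-y - c) 0) hb
  have h4 : a * c + b * c = c := by linear_combination c * hab
  linarith

/-- Composing a convex function with minimum at `0` with `max · 0` preserves convexity,
and the result is monotone. -/
lemma convexOn_max_comp {Δ : ℝ → ℝ} (hΔ : ConvexOn ℝ Set.univ Δ) (h0 : Δ 0 = 0)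
    (hnn : ∀ t, 0 ≤ Δ t) :
    ConvexOn ℝ Set.univ (fun t => Δ (max t 0)) ∧ Monotone (fun t => Δ (max t 0)) := by
  have hmono : ∀ {s t : ℝ}, 0 ≤ s → s ≤ t → Δ s ≤ Δ t := by
    intro s t hs hst
    rcases eq_or_lt_of_le hst with h | h
    · rw [h]
    · have ht : 0 < t := lt_of_le_of_lt hs h
      have ha : 0 ≤ (t - s) / t := div_nonneg (by linarith) ht.le
      have hb : 0 ≤ s / t := div_nonneg hs ht.le
      have hab : (t - s) / t + s / t = 1 := by field_simp; ring
      have h2 := hΔ.2 (Set.mem_univ (0 : ℝ)) (Set.mem_univ t) ha hb hab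
      have harg : ((t - s) / t) • (0 : ℝ) + (s / t) • t = s := by
        simp only [smul_eq_mul, mul_zero, zero_add]
        field_simp
      rw [harg, h0] at h2
      simp only [smul_eq_mul, mul_zero, zero_add] at h2
      have hb1 : s / t ≤ 1 := by rw [div_le_one ht]; linarith
      nlinarith [hnn t]
  constructor
  · refine ⟨convex_univ, fun x _ y _ a b ha hb hab => ?_⟩
    simp only [smul_eq_mul]
    have h1 : max (a * x + b * y) 0 ≤ a * max x 0 + b * max y 0 := by
      refine max_le ?_ (by positivity)
      have h2 := mul_le_mul_of_nonneg_left (le_max_left x 0) ha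
      have h3 := mul_le_mul_of_nonneg_left (le_max_left y 0) hb
      linarith
    have h2 : Δ (max (a * x + b * y) 0) ≤ Δ (a * max x 0 + b * max y 0) :=
      hmono (le_max_right _ _) h1
    have h3 := hΔ.2 (Set.mem_univ (max x 0)) (Set.mem_univ (max y 0)) ha hb hab
    simp only [smul_eq_mul] at h3
    exact h2.trans h3
  · intro s t hst
    exact hmono (le_max_right _ _) (max_le_max hst le_rfl)

/-- Non-integrability of `ψ (l/2 * W)` implies non-integrability of the recentered version. -/
lemma nonint_cent {Ω : Type*} [mΩ : MeasurableSpace Ω] (μ : Measure Ω) [IsProbabilityMeasure μ]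
    {ψ : ℝ → ℝ} (hψ : ConvexOn ℝ Set.univ ψ) (hpos : ∀ t, 0 ≤ ψ t) (hmeas : Measurable ψ)
    {W : Ω → ℝ} (hWm : Measurable W) (c : ℝ) {l : ℝ} (hl : 0 < l)
    (hnon : ¬ Integrable (fun ω => ψ (l / 2 * W ω)) μ) :
    ¬ Integrable (fun ω => ψ (l * (W ω - c))) μ := by
  intro hint
  apply hnon
  have hpt : ∀ ω, ψ (l / 2 * W ω) ≤ 1 / 2 * ψ (l * (W ω - c)) + 1 / 2 * ψ (l * c) := by
    intro ω
    have h2 := hψ.2 (Set.mem_univ (l * (W ω - c))) (Set.mem_univ (l * c))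
      (by norm_num : (0:ℝ) ≤ 1/2) (by norm_num : (0:ℝ) ≤ 1/2) (by norm_num)
    have harg : (1/2 : ℝ) • (l * (W ω - c)) + (1/2 : ℝ) • (l * c) = l / 2 * W ω := by
      simp only [smul_eq_mul]; ring
    rw [harg] at h2
    simpa using h2
  refine Integrable.mono' ((hint.const_mul (1/2 : ℝ)).add (integrable_const (1/2 * ψ (l * c))))
    ((hmeas.comp (hWm.const_mul (l/2))).aestronglyMeasurable) (ae_of_all _ fun ω => ?_)
  rw [Real.norm_eq_abs, abs_of_nonneg (hpos _)]
  exact hpt ω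

/-- The final contradiction: combining the tail inequality with non-integrability. -/
lemma final_contra {Ω : Type*} [mΩ : MeasurableSpace Ω] (μ : Measure Ω) [IsProbabilityMeasure μ]
    {ψ : ℝ → ℝ} (hψconv : ConvexOn ℝ Set.univ ψ) (hψmono : Monotone ψ) (hψpos : ∀ t, 0 ≤ ψ t)
    {Xf Uf : Ω → ℝ} (hXfm : Measurable Xf) (hXfint : Integrable Xf μ)
    (hUfm : Measurable Uf) (hUfint : Integrable Uf μ)
    {γ : ℝ} (hγ : 0 < γ)
    (hnonint : ∀ l, 0 < l → ¬ Integrable (fun ω => ψ (l * Xf ω)) μ)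
    (hintU : Integrable (fun ω => ψ (Uf ω)) μ)
    (hHG : ∀ s : ℝ, γ * ∫ ω, max ((Xf ω - ∫ ω', Xf ω' ∂μ) - s) 0 ∂μ
        ≤ ∫ ω, max (Uf ω - γ * s) 0 ∂μ) : False := by
  set W : Ω → ℝ := fun ω => Xf ω - ∫ ω', Xf ω' ∂μ with hW
  have hWm : Measurable W := hXfm.sub measurable_const
  have hWint : Integrable W μ := hXfint.sub (integrable_const _)
  have h1 : Integrable (fun ω => ψ (γ / 2 * W ω)) μ :=
    tail_integrable μ hψconv hψmono hψpos hWm hWint hUfint hintU hγ hHG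
  have h2 := nonint_cent μ hψconv hψpos hψmono.measurable hXfm (∫ ω', Xf ω' ∂μ)
    (show (0:ℝ) < γ/2 by positivity) (hnonint (γ/2/2) (by positivity))
  exact h2 h1

/-- Under Assumption 1 with `p = 1` and `β₀ > 0`, if there is a convex
`φ` with `E[φ(λU)] < E[φ(λX)] = ∞` for all `λ > 0` (where `U = Y₀ - X₀β₀`), then
`β₀ = max {b ∈ ℝ : Y₀ ⪰cx X₀ b}`. -/
theorem stmt9 (μ : Measure Ω) [IsProbabilityMeasure μ]
    (Y X : Ω → ℝ)
    (hYm : Measurable Y) (hXm : Measurable X)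
    (hY2 : MemLp Y 2 μ) (hX2 : MemLp X 2 μ)
    (hVarY : 0 < variance Y μ) (hVarX : 0 < variance X μ)
    (α₀ β₀ : ℝ)
    (hmod : μ[Y | MeasurableSpace.comap X inferInstance]
      =ᵐ[μ] fun ω => α₀ + X ω * β₀)
    (hβ₀ : 0 < β₀)
    (hφ : ∃ φ : ℝ → ℝ, ConvexOn ℝ Set.univ φ ∧ ∀ l : ℝ, 0 < l →
      Integrable (fun ω => φ (l * (cent μ Y ω - cent μ X ω * β₀))) μ ∧
      ¬ Integrable (fun ω => φ (l * X ω)) μ) :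
    IsGreatest {b : ℝ | ConvexOrdGE μ (cent μ Y) (fun ω => cent μ X ω * b)} β₀ := by
  obtain ⟨φ, hφconv, hφprop⟩ := hφ
  have hm := hXm.comap_le
  have hY1 : Integrable Y μ := hY2.integrable one_le_two
  have hX1 : Integrable X μ := hX2.integrable one_le_two
  have hY0int : Integrable (cent μ Y) μ :=
    (hY1.sub (integrable_const (∫ ω, Y ω ∂μ))).congr (ae_of_all _ fun ω => rfl)
  have hX0int : Integrable (cent μ X) μ :=
    (hX1.sub (integrable_const (∫ ω, X ω ∂μ))).congr (ae_of_all _ fun ω => rfl)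
  have hX0m : Measurable (cent μ X) := hXm.sub measurable_const
  have hY0m : Measurable (cent μ Y) := hYm.sub measurable_const
  -- mean of Y
  have hEY : ∫ ω, Y ω ∂μ = α₀ + (∫ ω, X ω ∂μ) * β₀ := by
    have h1 : ∫ ω, Y ω ∂μ
        = ∫ ω, (μ[Y | MeasurableSpace.comap X inferInstance]) ω ∂μ := (integral_condExp hm).symm
    rw [h1, integral_congr_ae hmod,
      integral_add (integrable_const α₀) (hX1.mul_const β₀), integral_const, probReal_univ,
      integral_mul_const]
    simp
  -- the conditional expectation of cent Y
  have hZae : (fun ω => cent μ X ω * β₀)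
      =ᵐ[μ] μ[cent μ Y | MeasurableSpace.comap X inferInstance] := by
    have h2 := condExp_sub (μ := μ) (m := MeasurableSpace.comap X inferInstance)
      hY1 (integrable_const (∫ ω, Y ω ∂μ))
    have h3 : μ[cent μ Y | MeasurableSpace.comap X inferInstance]
        =ᵐ[μ] μ[Y | MeasurableSpace.comap X inferInstance]
          - μ[fun _ => ∫ ω, Y ω ∂μ | MeasurableSpace.comap X inferInstance] := h2
    rw [condExp_const hm] at h3
    filter_upwards [h3, hmod] with ω h3ω h4ω
    rw [h3ω]
    simp only [Pi.sub_apply]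
    rw [h4ω, hEY]
    simp only [cent]
    ring
  constructor
  · -- membership : Y₀ ⪰cx X₀ β₀
    intro ψ hψconv hψint
    have hψc : Continuous ψ := by
      exact continuousOn_univ.mp (hψconv.continuousOn isOpen_univ)
    exact cond_jensen μ hm hψconv hψc hY0int
      ((hX0m.mul_const β₀).aestronglyMeasurable) hZae hψint
  · -- maximality
    intro b hb
    by_contra hcon
    push_neg at hcon
    have hγ : (0:ℝ) < b - β₀ := by linarith
    set U : Ω → ℝ := fun ω => cent μ Y ω - cent μ X ω * β₀ with hUdef
    have hUm : Measurable U := hY0m.sub (hX0m.mul_const β₀)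
    have hUint : Integrable U μ := hY0int.sub (hX0int.mul_const β₀)
    have hYd : ∀ ω, cent μ Y ω = β₀ * cent μ X ω + U ω := fun ω => by
      simp only [hUdef]; ring
    have hφX : ∀ l, 0 < l → ¬ Integrable (fun ω => φ (l * X ω)) μ := fun l hl => (hφprop l hl).2
    -- the recentered convex function Δ
    obtain ⟨s0, hs0⟩ := support_line hφconv 0
    set Δ : ℝ → ℝ := fun t => φ t - (φ 0 + s0 * t) with hΔdef
    have hΔnn : ∀ t, 0 ≤ Δ t := by
      intro t
      have h1 := hs0 t
      have h2 : s0 * (t - 0) = s0 * t := by ring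
      simp only [hΔdef]
      linarith
    have hΔ0 : Δ 0 = 0 := by simp [hΔdef]
    have hΔconv : ConvexOn ℝ Set.univ Δ := by
      refine ⟨convex_univ, fun x _ y _ a a' ha ha' haa => ?_⟩
      have h2 := hφconv.2 (Set.mem_univ x) (Set.mem_univ y) ha ha' haa
      simp only [smul_eq_mul, hΔdef] at h2 ⊢
      have h3 : a * φ 0 + a' * φ 0 = φ 0 := by linear_combination (φ 0) * haa
      have h4 : a * (s0 * x) + a' * (s0 * y) = s0 * (a * x + a' * y) := by ring
      nlinarith [h2, h3, h4]
    have hΔ'conv : ConvexOn ℝ Set.univ (fun t => Δ (-t)) := by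
      refine ⟨convex_univ, fun x _ y _ a a' ha ha' haa => ?_⟩
      have h2 := hΔconv.2 (Set.mem_univ (-x)) (Set.mem_univ (-y)) ha ha' haa
      simp only [smul_eq_mul] at h2 ⊢
      have h3 : a * -x + a' * -y = -(a * x + a' * y) := by ring
      rw [h3] at h2
      exact h2
    obtain ⟨hMconv, hMmono⟩ := convexOn_max_comp hΔconv hΔ0 hΔnn
    have hM' := convexOn_max_comp hΔ'conv (show (fun t => Δ (-t)) 0 = 0 by simpa using hΔ0)
      (fun t => hΔnn _)
    set M : ℝ → ℝ := fun t => Δ (max t 0) with hMdef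
    set M' : ℝ → ℝ := fun t => Δ (-(max t 0)) with hM'def
    have hM'conv : ConvexOn ℝ Set.univ M' := hM'.1
    have hM'mono : Monotone M' := hM'.2
    have hMpos : ∀ t, 0 ≤ M t := fun t => hΔnn _
    have hM'pos : ∀ t, 0 ≤ M' t := fun t => hΔnn _
    have hdecomp : ∀ x : ℝ, Δ x = M x + M' (-x) := by
      intro x
      rcases le_total x 0 with h | h
      · have h1 : max x 0 = 0 := max_eq_right h
        have h2 : max (-x) 0 = -x := max_eq_left (by linarith)
        simp only [hMdef, hM'def, h1, h2, neg_neg, hΔ0, zero_add]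
      · have h1 : max x 0 = x := max_eq_left h
        have h2 : max (-x) 0 = 0 := max_eq_right (by linarith)
        simp only [hMdef, hM'def, h1, h2, neg_zero, hΔ0, add_zero]
    -- Δ integrability facts
    have hΔX : ∀ l, 0 < l → ¬ Integrable (fun ω => Δ (l * X ω)) μ := by
      intro l hl hint
      refine hφX l hl ?_
      have heq : (fun ω => φ (l * X ω)) = fun ω => Δ (l * X ω) + (φ 0 + s0 * (l * X ω)) := by
        funext ω; simp only [hΔdef]; ring
      rw [heq]
      exact hint.add ((integrable_const (φ 0)).add ((hX1.const_mul l).const_mul s0))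
    have hΔU : ∀ l, 0 < l → Integrable (fun ω => Δ (l * U ω)) μ := by
      intro l hl
      have h1 : Integrable (fun ω => φ (l * U ω)) μ := (hφprop l hl).1
      have heq : (fun ω => Δ (l * U ω)) = fun ω => φ (l * U ω) - (φ 0 + s0 * (l * U ω)) := by
        funext ω; simp only [hΔdef]
      rw [heq]
      exact h1.sub ((integrable_const (φ 0)).add ((hUint.const_mul l).const_mul s0))
    have hMU : ∀ l, 0 < l → Integrable (fun ω => M (l * U ω)) μ := by
      intro l hl
      refine (hΔU l hl).mono'
        ((hMmono.measurable.comp (hUm.const_mul l)).aestronglyMeasurable)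
        (ae_of_all _ fun ω => ?_)
      rw [Real.norm_eq_abs, abs_of_nonneg (hMpos _)]
      have h1 := hdecomp (l * U ω)
      have h2 := hM'pos (-(l * U ω))
      linarith
    have hM'U : ∀ l, 0 < l → Integrable (fun ω => M' (l * (-U ω))) μ := by
      intro l hl
      refine (hΔU l hl).mono'
        ((hM'mono.measurable.comp ((hUm.neg).const_mul l)).aestronglyMeasurable)
        (ae_of_all _ fun ω => ?_)
      rw [Real.norm_eq_abs, abs_of_nonneg (hM'pos _)]
      have h0 : l * (-U ω) = -(l * U ω) := by ring
      rw [h0]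
      have h1 := hdecomp (l * U ω)
      have h2 := hMpos (l * U ω)
      linarith
    -- convex order consequences
    have hord_pos : ∀ c : ℝ, ∫ ω, max (b * cent μ X ω - c) 0 ∂μ
        ≤ ∫ ω, max (β₀ * cent μ X ω + U ω - c) 0 ∂μ := by
      intro c
      have h1 := hb (fun t => max (t - c) 0) (convexOn_pos_shift c) (pos_part_int hY0int c)
      have e1 : (fun ω => max (b * cent μ X ω - c) 0)
          = fun ω => max (cent μ X ω * b - c) 0 := by
        funext ω; rw [mul_comm b]
      have e2 : (fun ω => max (β₀ * cent μ X ω + U ω - c) 0)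
          = fun ω => max (cent μ Y ω - c) 0 := by
        funext ω; rw [hYd ω]
      rw [e1, e2]
      exact h1.2
    have hord_neg : ∀ c : ℝ, ∫ ω, max (b * (-cent μ X ω) - c) 0 ∂μ
        ≤ ∫ ω, max (β₀ * (-cent μ X ω) + (-U ω) - c) 0 ∂μ := by
      intro c
      have hNint : Integrable (fun ω => max (-cent μ Y ω - c) 0) μ :=
        pos_part_int hY0int.neg c
      have h1 := hb (fun t => max (-t - c) 0) (convexOn_neg_shift c) hNint
      have e1 : (fun ω => max (b * (-cent μ X ω) - c) 0)
          = fun ω => max (-(cent μ X ω * b) - c) 0 := by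
        funext ω; ring_nf
      have e2 : (fun ω => max (β₀ * (-cent μ X ω) + (-U ω) - c) 0)
          = fun ω => max (-cent μ Y ω - c) 0 := by
        funext ω; rw [hYd ω]; ring_nf
      rw [e1, e2]
      exact h1.2
    have hHGpos := key_tail μ hβ₀ hcon hX0int hUint hord_pos
    have hHGneg := key_tail μ hβ₀ hcon hX0int.neg hUint.neg hord_neg
    -- branch on which tail of Δ is heavy
    by_cases hA : ∀ l, 0 < l → ¬ Integrable (fun ω => M (l * X ω)) μ
    · refine final_contra μ hMconv hMmono hMpos hXm hX1 hUm hUint hγ hA ?_ ?_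
      · simpa using hMU 1 one_pos
      · intro s
        exact hHGpos s
    · push_neg at hA
      obtain ⟨l₀, hl₀, hint₀⟩ := hA
      have hB' : ∀ l, 0 < l → ¬ Integrable (fun ω => M' (l * (-X ω))) μ := by
        intro l hl hint
        have hl' : 0 < min l l₀ := lt_min hl hl₀
        have hMl' : Integrable (fun ω => M (min l l₀ * X ω)) μ := by
          refine hint₀.mono'
            ((hMmono.measurable.comp (hXm.const_mul _)).aestronglyMeasurable)
            (ae_of_all _ fun ω => ?_)
          rw [Real.norm_eq_abs, abs_of_nonneg (hMpos _)]
          rcases le_total (X ω) 0 with h | h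
          · have h1 : min l l₀ * X ω ≤ 0 := mul_nonpos_iff.mpr (Or.inl ⟨hl'.le, h⟩)
            have h2 : M (min l l₀ * X ω) = 0 := by
              simp only [hMdef, max_eq_right h1, hΔ0]
            rw [h2]
            exact hMpos _
          · refine hMmono ?_
            have := min_le_right l l₀
            nlinarith
        have hM'l' : Integrable (fun ω => M' (min l l₀ * (-X ω))) μ := by
          refine hint.mono'
            ((hM'mono.measurable.comp ((hXm.neg).const_mul _)).aestronglyMeasurable)
            (ae_of_all _ fun ω => ?_)
          rw [Real.norm_eq_abs, abs_of_nonneg (hM'pos _)]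
          rcases le_total (X ω) 0 with h | h
          · refine hM'mono ?_
            have := min_le_left l l₀
            nlinarith
          · have h1 : min l l₀ * (-X ω) ≤ 0 := mul_nonpos_iff.mpr (Or.inl ⟨hl'.le, by linarith⟩)
            have h2 : M' (min l l₀ * (-X ω)) = 0 := by
              simp only [hM'def, max_eq_right h1, neg_zero, hΔ0]
            rw [h2]
            exact hM'pos _
        refine hΔX (min l l₀) hl' ?_
        have heq : (fun ω => Δ (min l l₀ * X ω))
            = fun ω => M (min l l₀ * X ω) + M' (min l l₀ * (-X ω)) := by
          funext ω
          have h1 : min l l₀ * (-X ω) = -(min l l₀ * X ω) := by ring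
          rw [h1]
          exact hdecomp _
        rw [heq]
        exact hMl'.add hM'l'
      refine final_contra μ hM'conv hM'mono hM'pos hXm.neg hX1.neg hUm.neg hUint.neg hγ hB' ?_ ?_
      · simpa using hM'U 1 one_pos
      · intro s
        have h1 : ∫ ω', -X ω' ∂μ = -∫ ω', X ω' ∂μ := integral_neg X
        have h2 : (fun ω => max ((-X ω - ∫ ω', -X ω' ∂μ) - s) 0)
            = fun ω => max (-cent μ X ω - s) 0 := by
          funext ω
          rw [h1]
          simp only [cent]
          ring_nf
        calc (b - β₀) * ∫ ω, max ((-X ω - ∫ ω', -X ω' ∂μ) - s) 0 ∂μ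
            = (b - β₀) * ∫ ω, max (-cent μ X ω - s) 0 ∂μ := by rw [h2]
          _ ≤ ∫ ω, max (-U ω - (b - β₀) * s) 0 ∂μ := hHGneg s
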